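/- Let n be a positive natural number, let U be an n×n complex unitary matrix, and let σ be a subset of the index set {1,…,n}. Then the product of the principal minor indexed by σ and the complementary principal minor indexed by σᶜ satisfies det U_{σσ} · det U_{σᶜσᶜ} = |det U_{σσ}|² · det U. In particular, when both minors are nonzero, the phase angles of the two complementary principal minors add up to the phase angle of det U. -/

import Mathlib

open Matrix

/-- The principal minor of a matrix `M` indexed by a subset `σ` of the indices:
the determinant of the submatrix keeping rows and columns in `σ`.
By convention, the minor indexed by the empty set is `1`. -/
noncomputable def principalMinor {n : ℕ} (M : Matrix (Fin n) (Fin n) ℂ)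
    (σ : Finset (Fin n)) : ℂ :=
  (M.submatrix (fun i : σ => (i : Fin n)) (fun i : σ => (i : Fin n))).det

lemma aux_block {m o : Type*} [Fintype m] [DecidableEq m] [Fintype o] [DecidableEq o]
    (A : Matrix m m ℂ) (B : Matrix m o ℂ) (C : Matrix o m ℂ) (D : Matrix o o ℂ)
    (h : fromBlocks A B C D * (fromBlocks A B C D)ᴴ = 1) :
    D.det = (fromBlocks A B C D).det * star A.det := by
  rw [fromBlocks_conjTranspose, fromBlocks_multiply, ← fromBlocks_one, fromBlocks_inj] at h
  obtain ⟨h11, -, h21, -⟩ := h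
  have key : fromBlocks A B C D * fromBlocks Aᴴ 0 Bᴴ 1 = fromBlocks 1 B 0 D := by
    rw [fromBlocks_multiply, h11, h21]
    simp
  have := congrArg Matrix.det key
  rw [det_mul, det_fromBlocks_zero₁₂, det_fromBlocks_zero₂₁] at this
  simpa [det_conjTranspose] using this.symm

/-- The product of complementary principal minors of a unitary matrix equals the squared
magnitude of either minor times the determinant of the matrix; in particular the phases of
complementary principal minors add up to the phase of the determinant. -/
theorem principalMinor_mul_compl {n : ℕ} (hn : 0 < n)
    (U : Matrix (Fin n) (Fin n) ℂ) (hU : Uᴴ * U = 1) (σ : Finset (Fin n)) :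
    principalMinor U σ * principalMinor U σᶜ =
      ((‖principalMinor U σ‖) ^ 2 : ℝ) * U.det := by
  classical
  set p : Fin n → Prop := fun a => a ∈ σ with hp
  have hU' : U * Uᴴ = 1 := mul_eq_one_comm.mp hU
  let e : {a // p a} ⊕ {a // ¬ p a} ≃ Fin n := Equiv.sumCompl p
  let V : Matrix _ _ ℂ := U.submatrix e e
  have hV : V * Vᴴ = 1 := by
    have : Vᴴ = Uᴴ.submatrix e e := by simp [V, conjTranspose_submatrix]
    rw [this]
    show (U.submatrix e (e : _ ≃ Fin n)) * Uᴴ.submatrix (e : _ ≃ Fin n) e = 1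
    rw [Matrix.submatrix_mul_equiv, hU', submatrix_one_equiv]
  have hVdet : V.det = U.det := Matrix.det_submatrix_equiv_self e U
  -- identify the blocks
  have hVblocks : V = fromBlocks (U.toBlock p p) (U.toBlock p (fun a => ¬ p a))
      (U.toBlock (fun a => ¬ p a) p) (U.toBlock (fun a => ¬ p a) (fun a => ¬ p a)) := by
    ext i j
    cases i <;> cases j <;> rfl
  rw [hVblocks] at hV
  have key := aux_block _ _ _ _ hV
  rw [← hVblocks, hVdet] at key
  have h1 : principalMinor U σ = (U.toBlock p p).det := rfl
  have h2 : principalMinor U σᶜ = (U.toBlock (fun a => ¬ p a) (fun a => ¬ p a)).det := by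
    let e2 : {x : Fin n // x ∈ σᶜ} ≃ {x : Fin n // ¬ p x} :=
      Equiv.subtypeEquivRight (fun x => by simp [hp])
    unfold principalMinor
    rw [show (U.submatrix (fun i : {x // x ∈ σᶜ} => (i : Fin n))
          (fun i : {x // x ∈ σᶜ} => (i : Fin n)))
        = (U.toBlock (fun a => ¬ p a) (fun a => ¬ p a)).submatrix e2 e2 from rfl]
    exact Matrix.det_submatrix_equiv_self e2 _
  rw [h1, h2, key, Complex.sq_norm, ← Complex.mul_conj, Complex.star_def]
  ring
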